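/- On the VB-mesh, for every index i with 1 ≤ i ≤ J−2 (so that t_{i+1} ≤ t_{J−1} < α and all three points x_{i−1}, x_i, x_{i+1} lie on the graded part), one has the identity ε(h_{i+1} − h_i)/(h_i h_{i+1}) = 2(q − t_i)/(aq), and consequently ε(h_{i+1} − h_i)/(h_i h_{i+1}) ≤ 2/a. -/

import Mathlib

/-- `ψ(t) = aεt/(q−t)`, the Bakhvalov mesh-generating function on the fine part. -/
noncomputable def psi (a ε q t : ℝ) : ℝ := a * ε * t / (q - t)

/-- `ψ′(t) = aεq/(q−t)²`. -/
noncomputable def psi' (a ε q t : ℝ) : ℝ := a * ε * q / (q - t) ^ 2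

/-- The transition parameter `α = (q − √(aεq(1−q+aε)))/(1+aε)` of the VB-mesh. -/
noncomputable def alph (a ε q : ℝ) : ℝ :=
  (q - Real.sqrt (a * ε * q * (1 - q + a * ε))) / (1 + a * ε)

/-- The mesh-generating function `λ`: `ψ` on `[0,α]`, its tangent line on `[α,1]`. -/
noncomputable def lam (a ε q t : ℝ) : ℝ :=
  if t ≤ alph a ε q then psi a ε q t
  else psi a ε q (alph a ε q) + psi' a ε q (alph a ε q) * (t - alph a ε q)

/-- VB-mesh points `x_i = λ(i/N)`. -/
noncomputable def meshx (a ε q : ℝ) (N i : ℕ) : ℝ := lam a ε q ((i : ℝ) / (N : ℝ))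

/-- Mesh steps `h_i = x_i − x_{i−1}`. -/
noncomputable def meshh (a ε q : ℝ) (N i : ℕ) : ℝ :=
  meshx a ε q N i - meshx a ε q N (i - 1)

/-- Averaged mesh steps `h̄_i = (h_i + h_{i+1})/2`. -/
noncomputable def meshhb (a ε q : ℝ) (N i : ℕ) : ℝ :=
  (meshh a ε q N i + meshh a ε q N (i + 1)) / 2

/-- The coarse (uniform) step `H = ψ′(α)/N` of the VB-mesh. -/
noncomputable def bigH (a ε q : ℝ) (N : ℕ) : ℝ := psi' a ε q (alph a ε q) / N

/-- on the graded part of the VB-mesh (indices `1 ≤ i ≤ J−2`),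
`ε(h_{i+1} − h_i)/(h_i h_{i+1}) = 2(q − t_i)/(aq) ≤ 2/a`. -/
theorem stmt_3 (q a ε : ℝ) (hq0 : 0 < q) (hq1 : q < 1) (ha : 0 < a) (hε : 0 < ε)
    (haq : a * ε < q) (N : ℕ) (hN : 2 ≤ N) (J : ℕ) (hJ1 : 1 ≤ J) (hJN : J ≤ N)
    (hJl : ((J : ℝ) - 1) / (N : ℝ) < alph a ε q)
    (hJr : alph a ε q ≤ (J : ℝ) / (N : ℝ))
    (i : ℕ) (hi1 : 1 ≤ i) (hi2 : i + 2 ≤ J) :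
    ε * (meshh a ε q N (i + 1) - meshh a ε q N i) /
        (meshh a ε q N i * meshh a ε q N (i + 1)) =
      2 * (q - (i : ℝ) / (N : ℝ)) / (a * q) ∧
    ε * (meshh a ε q N (i + 1) - meshh a ε q N i) /
        (meshh a ε q N i * meshh a ε q N (i + 1)) ≤ 2 / a := by
  have hn : (0:ℝ) < (N:ℝ) := by exact_mod_cast Nat.lt_of_lt_of_le (by norm_num) hN
  have hn' : (N:ℝ) ≠ 0 := ne_of_gt hn
  have haε : 0 < a * ε := mul_pos ha hε
  have hα : alph a ε q < q := by
    unfold alph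
    have h1 : 0 < 1 + a * ε := by linarith
    rw [div_lt_iff₀ h1]
    have hs : 0 ≤ Real.sqrt (a * ε * q * (1 - q + a * ε)) := Real.sqrt_nonneg _
    nlinarith [mul_pos hq0 haε]
  have hi1' : (1:ℝ) ≤ (i:ℝ) := by exact_mod_cast hi1
  have hi2' : (i:ℝ) + 2 ≤ (J:ℝ) := by exact_mod_cast hi2
  set s0 : ℝ := ((i:ℝ) - 1) / (N:ℝ) with hs0
  set s1 : ℝ := (i:ℝ) / (N:ℝ) with hs1
  set s2 : ℝ := ((i:ℝ) + 1) / (N:ℝ) with hs2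
  have hkey : ∀ t : ℝ, t ≤ s2 → t ≤ alph a ε q := by
    intro t ht
    have h2 : s2 ≤ ((J:ℝ) - 1) / (N:ℝ) := (div_le_div_iff_of_pos_right hn).mpr (by linarith)
    linarith
  have hle0 : s0 ≤ alph a ε q := hkey s0 ((div_le_div_iff_of_pos_right hn).mpr (by linarith))
  have hle1 : s1 ≤ alph a ε q := hkey s1 ((div_le_div_iff_of_pos_right hn).mpr (by linarith))
  have hle2 : s2 ≤ alph a ε q := hkey s2 le_rfl
  have hlam : ∀ t : ℝ, t ≤ alph a ε q → lam a ε q t = psi a ε q t := fun t ht => if_pos ht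
  have hd0 : 0 < q - s0 := by linarith
  have hd1 : 0 < q - s1 := by linarith
  have hd2 : 0 < q - s2 := by linarith
  have hc : ((i - 1 : ℕ):ℝ) = (i:ℝ) - 1 := by
    rw [Nat.cast_sub hi1]; norm_num
  have e1 : meshh a ε q N i = psi a ε q s1 - psi a ε q s0 := by
    unfold meshh meshx
    rw [hc, hlam _ hle1, hlam _ hle0]
  have e2 : meshh a ε q N (i + 1) = psi a ε q s2 - psi a ε q s1 := by
    unfold meshh meshx
    simp only [Nat.add_sub_cancel]
    push_cast
    rw [hlam _ hle2, hlam _ hle1]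
  have hdiff : ∀ s t : ℝ, q - s ≠ 0 → q - t ≠ 0 →
      psi a ε q t - psi a ε q s = a * ε * q * (t - s) / ((q - t) * (q - s)) := by
    intro s t hs ht
    unfold psi
    field_simp
    ring
  have e1' : meshh a ε q N i = a * ε * q * (1 / (N:ℝ)) / ((q - s1) * (q - s0)) := by
    rw [e1, hdiff _ _ hd0.ne' hd1.ne']
    rw [show s1 - s0 = 1 / (N:ℝ) by rw [hs0, hs1]; field_simp; ring]
  have e2' : meshh a ε q N (i + 1) = a * ε * q * (1 / (N:ℝ)) / ((q - s2) * (q - s1)) := by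
    rw [e2, hdiff _ _ hd1.ne' hd2.ne']
    rw [show s2 - s1 = 1 / (N:ℝ) by rw [hs1, hs2]; field_simp; ring]
  have aux : ∀ A B C c δ : ℝ, A ≠ 0 → B ≠ 0 → C ≠ 0 → c ≠ 0 → δ ≠ 0 →
      ε * (c * δ / (C * B) - c * δ / (B * A)) / ((c * δ / (B * A)) * (c * δ / (C * B))) =
        ε * (A - C) * B / (c * δ) := by
    intro A B C c δ hA hB hC hcc hδ
    field_simp
  have hmain : ε * (meshh a ε q N (i + 1) - meshh a ε q N i) /
      (meshh a ε q N i * meshh a ε q N (i + 1)) = 2 * (q - s1) / (a * q) := by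
    rw [e1', e2', aux _ _ _ _ _ hd0.ne' hd1.ne' hd2.ne' (by positivity) (by positivity)]
    rw [show (q - s0) - (q - s2) = 2 / (N:ℝ) by rw [hs0, hs2]; field_simp; ring]
    field_simp
  refine ⟨hmain, ?_⟩
  rw [hmain]
  have hs1pos : 0 ≤ s1 := by positivity
  rw [div_le_div_iff₀ (by positivity) ha]
  nlinarith [mul_nonneg hs1pos ha.le]
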